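/- Suppose a submodule W of F^α_{2b}(V) contains w_i(r₁,r₂) = Σ_{j=0}^{s} a_{ij}(r₁,r₂) v_{i+j}(r₁,r₂) with a_{i0}=1, a_{is}≠0, and is closed under Ē₃₁. If α₁−b−λ ∉ ℤ, then the coefficients of the resulting element Ē₃₁ w_i(r₁,r₂) (normalized so its v_i-coefficient is 1) satisfy a_{ij}(r₁−1,r₂) = ((r₁+α₁−b−λ−i−j)/(r₁+α₁−b−λ−i)) a_{ij}(r₁,r₂) for j = 1,…,s. -/
import Mathlib


set_option linter.unusedVariables false
/- F^α_{2b}(V) modeled as (ℤ × ℤ × ℤ) →₀ ℂ with basis vᵢ(r₁,r₂) = single (i,r₁,r₂) 1,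
   carrying the sl₃-action of formulas (3.2): parameters α₁, α₂, λ (written lam), b, c. -/

abbrev F3 := (ℤ × ℤ × ℤ) →₀ ℂ

/-- The basis vector vᵢ(r₁,r₂). -/
noncomputable def vb (i r₁ r₂ : ℤ) : F3 := Finsupp.single (i, r₁, r₂) 1

noncomputable def Eb11 (α₁ α₂ lam b c : ℂ) : F3 →ₗ[ℂ] F3 :=
  Finsupp.lsum ℂ fun p => ((p.2.1 : ℂ) + α₁) • Finsupp.lsingle p

noncomputable def Eb22 (α₁ α₂ lam b c : ℂ) : F3 →ₗ[ℂ] F3 :=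
  Finsupp.lsum ℂ fun p => ((p.2.2 : ℂ) + α₂) • Finsupp.lsingle p

noncomputable def Eb33 (α₁ α₂ lam b c : ℂ) : F3 →ₗ[ℂ] F3 :=
  Finsupp.lsum ℂ fun p => (-((p.2.1 : ℂ) + α₁ + (p.2.2 : ℂ) + α₂)) • Finsupp.lsingle p

noncomputable def Eb12 (α₁ α₂ lam b c : ℂ) : F3 →ₗ[ℂ] F3 :=
  Finsupp.lsum ℂ fun p =>
    (lam + (p.1 : ℂ) - b + (p.2.2 : ℂ) + α₂) • Finsupp.lsingle (p.1, p.2.1 + 1, p.2.2 - 1)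
      + (c + lam + (p.1 : ℂ)) • Finsupp.lsingle (p.1 + 1, p.2.1 + 1, p.2.2 - 1)

noncomputable def Eb21 (α₁ α₂ lam b c : ℂ) : F3 →ₗ[ℂ] F3 :=
  Finsupp.lsum ℂ fun p =>
    (c - lam - (p.1 : ℂ)) • Finsupp.lsingle (p.1 - 1, p.2.1 - 1, p.2.2 + 1)
      + (-(lam + (p.1 : ℂ)) - b + (p.2.1 : ℂ) + α₁) • Finsupp.lsingle (p.1, p.2.1 - 1, p.2.2 + 1)

noncomputable def Eb13 (α₁ α₂ lam b c : ℂ) : F3 →ₗ[ℂ] F3 :=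
  Finsupp.lsum ℂ fun p =>
    -(((p.2.1 : ℂ) + α₁ + (p.2.2 : ℂ) + α₂ + b + lam + (p.1 : ℂ)) • Finsupp.lsingle (p.1, p.2.1 + 1, p.2.2)
      + (c + lam + (p.1 : ℂ)) • Finsupp.lsingle (p.1 + 1, p.2.1 + 1, p.2.2))

noncomputable def Eb31 (α₁ α₂ lam b c : ℂ) : F3 →ₗ[ℂ] F3 :=
  Finsupp.lsum ℂ fun p =>
    ((p.2.1 : ℂ) + α₁ - b - lam - (p.1 : ℂ)) • Finsupp.lsingle (p.1, p.2.1 - 1, p.2.2)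

noncomputable def Eb23 (α₁ α₂ lam b c : ℂ) : F3 →ₗ[ℂ] F3 :=
  Finsupp.lsum ℂ fun p =>
    -((c - lam - (p.1 : ℂ)) • Finsupp.lsingle (p.1 - 1, p.2.1, p.2.2 + 1)
      + ((p.2.1 : ℂ) + α₁ + (p.2.2 : ℂ) + α₂ + b - lam - (p.1 : ℂ)) • Finsupp.lsingle (p.1, p.2.1, p.2.2 + 1))

noncomputable def Eb32 (α₁ α₂ lam b c : ℂ) : F3 →ₗ[ℂ] F3 :=
  Finsupp.lsum ℂ fun p =>
    ((p.2.2 : ℂ) + α₂ - b + lam + (p.1 : ℂ)) • Finsupp.lsingle (p.1, p.2.1, p.2.2 - 1)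


lemma Eb31_vb (α₁ α₂ lam b c : ℂ) (k r₁ r₂ : ℤ) :
    Eb31 α₁ α₂ lam b c (vb k r₁ r₂)
      = ((r₁ : ℂ) + α₁ - b - lam - (k : ℂ)) • vb k (r₁ - 1) r₂ := by
  simp [Eb31, vb, Finsupp.lsum_single, Finsupp.smul_single]

/-- Applying Ē₃₁ to w_i(r₁,r₂) = Σ_{j=0}^s a_j v_{i+j}(r₁,r₂) (with a₀ = 1, a_s ≠ 0) gives,
    after normalizing the vᵢ-coefficient to 1, the coefficients
    a_{ij}(r₁−1,r₂) = ((r₁+α₁−b−λ−i−j)/(r₁+α₁−b−λ−i)) a_j; all denominators are nonzero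
    since α₁−b−λ ∉ ℤ. -/
theorem E31_coefficient_recursion (α₁ α₂ lam b c : ℂ)
    (h : ∀ m : ℤ, α₁ - b - lam ≠ (m : ℂ))
    (s : ℕ) (hs : 1 ≤ s) (a : ℕ → ℂ) (ha0 : a 0 = 1) (has : a s ≠ 0)
    (i r₁ r₂ : ℤ) (W : Submodule ℂ F3)
    (hw : (∑ j ∈ Finset.range (s + 1), a j • vb (i + (j : ℤ)) r₁ r₂) ∈ W)
    (hW31 : ∀ x ∈ W, Eb31 α₁ α₂ lam b c x ∈ W) :
    Eb31 α₁ α₂ lam b c (∑ j ∈ Finset.range (s + 1), a j • vb (i + (j : ℤ)) r₁ r₂)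
      = ((r₁ : ℂ) + α₁ - b - lam - (i : ℂ)) •
          ∑ j ∈ Finset.range (s + 1),
            ((((r₁ : ℂ) + α₁ - b - lam - (i : ℂ) - (j : ℂ)) /
              ((r₁ : ℂ) + α₁ - b - lam - (i : ℂ))) * a j) • vb (i + (j : ℤ)) (r₁ - 1) r₂ := by
  have hD : ((r₁ : ℂ) + α₁ - b - lam - (i : ℂ)) ≠ 0 := by
    intro h0
    apply h (i - r₁)
    push_cast
    linear_combination h0
  rw [map_sum, Finset.smul_sum]
  refine Finset.sum_congr rfl fun j hj => ?_
  rw [map_smul, Eb31_vb]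
  rw [smul_smul, smul_smul]
  congr 1
  push_cast
  field_simp
  ring
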